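/- Let (X, μ) be a measure space equipped with a ball-basis ℬ. Then there exists an increasing sequence of balls G₁ ⊂ G₂ ⊂ … ⊂ Gₙ ⊂ … with X = ∪ₖ Gₖ, and moreover for every ball B ∈ ℬ there exists some n with B ⊂ Gₙ. -/

import Mathlib

open MeasureTheory Set ENNReal NNReal

/-- A ball-basis on a measure space `(X, μ)`: a family of measurable sets of positive
finite measure satisfying conditions B1)-B4) of Karagulyan. -/
structure BallBasis (X : Type*) [MeasurableSpace X] (μ : Measure X) where
  balls : Set (Set X)
  K : ℝ≥0
  K_pos : 0 < K
  measurableSet : ∀ B ∈ balls, MeasurableSet B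
  measure_pos : ∀ B ∈ balls, 0 < μ B
  measure_lt_top : ∀ B ∈ balls, μ B < ∞
  exists_ball : ∀ x y : X, ∃ B ∈ balls, x ∈ B ∧ y ∈ B
  approx : ∀ E : Set X, MeasurableSet E → ∀ ε : ℝ≥0∞, 0 < ε →
      ∃ Bs : ℕ → Set X, (∀ k, Bs k ∈ balls) ∧ μ (symmDiff E (⋃ k, Bs k)) < ε
  hull : Set X → Set X
  hull_mem : ∀ B ∈ balls, hull B ∈ balls
  star_subset_hull : ∀ B ∈ balls,
      (⋃₀ {A | A ∈ balls ∧ μ A ≤ 2 * μ B ∧ (A ∩ B).Nonempty}) ⊆ hull B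
  measure_hull_le : ∀ B ∈ balls, μ (hull B) ≤ (K : ℝ≥0∞) * μ B

namespace BallBasis

variable {X : Type*} [MeasurableSpace X] {μ : Measure X}

/-- `B* = ⋃ {A ∈ ℬ : μ A ≤ 2 μ B, A ∩ B ≠ ∅}`. -/
def star (ℬ : BallBasis X μ) (B : Set X) : Set X :=
  ⋃₀ {A | A ∈ ℬ.balls ∧ μ A ≤ 2 * μ B ∧ (A ∩ B).Nonempty}

/-- The doubling condition for a ball-basis, with doubling constant `η`. -/
def Doubling (ℬ : BallBasis X μ) (η : ℝ≥0) : Prop :=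
  ∀ B ∈ ℬ.balls, ℬ.star B ≠ univ →
    ∃ B' ∈ ℬ.balls, B ⊂ B' ∧ μ B' ≤ (η : ℝ≥0∞) * μ B

end BallBasis

namespace BallBasis

variable {X : Type*} [MeasurableSpace X] {μ : Measure X}

lemma mem_star_of (ℬ : BallBasis X μ) {A B : Set X} (hA : A ∈ ℬ.balls)
    (hle : μ A ≤ 2 * μ B) (hne : (A ∩ B).Nonempty) : A ⊆ ℬ.star B :=
  subset_sUnion_of_mem ⟨hA, hle, hne⟩

lemma nonempty_of_mem (ℬ : BallBasis X μ) {B : Set X} (hB : B ∈ ℬ.balls) : B.Nonempty := by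
  rcases B.eq_empty_or_nonempty with h | h
  · exact absurd (ℬ.measure_pos B hB) (by simp [h])
  · exact h

lemma subset_star (ℬ : BallBasis X μ) {B : Set X} (hB : B ∈ ℬ.balls) : B ⊆ ℬ.star B :=
  ℬ.mem_star_of hB (le_mul_of_one_le_left zero_le one_le_two)
    (by simpa using ℬ.nonempty_of_mem hB)

lemma subset_hull (ℬ : BallBasis X μ) {B : Set X} (hB : B ∈ ℬ.balls) : B ⊆ ℬ.hull B :=
  (ℬ.subset_star hB).trans (ℬ.star_subset_hull B hB)

/-- One step of the exhaustion construction. -/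
noncomputable def step (ℬ : BallBasis X μ) (B : Set X) : Set X := by
  classical
  exact if h : ∃ A, A ∈ ℬ.balls ∧ (A ∩ B).Nonempty ∧ 2 * μ B < μ A
    then ℬ.hull (ℬ.hull h.choose) else ℬ.hull B

lemma step_spec (ℬ : BallBasis X μ) {B : Set X} (hB : B ∈ ℬ.balls) :
    ℬ.step B ∈ ℬ.balls ∧ ℬ.star B ⊆ ℬ.step B ∧
      ((∀ A ∈ ℬ.balls, (A ∩ B).Nonempty → μ A ≤ 2 * μ B) ∨ 2 * μ B < μ (ℬ.step B)) := by
  classical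
  unfold step
  split_ifs with h
  · obtain ⟨hA, hne, hlt⟩ := h.choose_spec
    set A := h.choose with hAdef
    have hAhull : A ∈ ℬ.balls := hA
    have hHA : ℬ.hull A ∈ ℬ.balls := ℬ.hull_mem A hA
    have hHHA : ℬ.hull (ℬ.hull A) ∈ ℬ.balls := ℬ.hull_mem _ hHA
    -- B ⊆ hull A
    have hBstarA : B ⊆ ℬ.star A := by
      refine ℬ.mem_star_of hB ?_ ?_
      · exact le_trans (le_mul_of_one_le_left zero_le one_le_two)
          (le_trans hlt.le (le_mul_of_one_le_left zero_le one_le_two))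
      · exact hne.mono (by rw [inter_comm])
    have hBhullA : B ⊆ ℬ.hull A := hBstarA.trans (ℬ.star_subset_hull A hA)
    have hAle : μ A ≤ μ (ℬ.hull A) := measure_mono (ℬ.subset_hull hA)
    refine ⟨hHHA, ?_, Or.inr ?_⟩
    · -- star B ⊆ hull (hull A)
      intro x hx
      obtain ⟨D, ⟨hD, hDle, hDne⟩, hxD⟩ := hx
      have : D ⊆ ℬ.star (ℬ.hull A) := by
        refine ℬ.mem_star_of hD ?_ ?_
        · calc μ D ≤ 2 * μ B := hDle
            _ ≤ μ A := hlt.le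
            _ ≤ μ (ℬ.hull A) := hAle
            _ ≤ 2 * μ (ℬ.hull A) := le_mul_of_one_le_left zero_le one_le_two
        · exact hDne.mono (inter_subset_inter_right _ hBhullA)
      exact ℬ.star_subset_hull _ hHA (this hxD)
    · calc 2 * μ B < μ A := hlt
        _ ≤ μ (ℬ.hull A) := hAle
        _ ≤ μ (ℬ.hull (ℬ.hull A)) := measure_mono (ℬ.subset_hull hHA)
  · push_neg at h
    exact ⟨ℬ.hull_mem B hB, ℬ.star_subset_hull B hB,
      Or.inl fun A hA hne => h A hA hne⟩

end BallBasis

/-- There exists an increasing sequence of balls exhausting `X`, which eventually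
absorbs every ball. -/
theorem exists_increasing_exhaustion_of_ballBasis {X : Type*} [MeasurableSpace X] [Nonempty X]
    {μ : Measure X} (ℬ : BallBasis X μ) :
    ∃ G : ℕ → Set X, (∀ n, G n ∈ ℬ.balls) ∧ Monotone G ∧ (⋃ n, G n) = univ ∧
      ∀ B ∈ ℬ.balls, ∃ n, B ⊆ G n := by
  classical
  obtain ⟨x₀⟩ := ‹Nonempty X›
  obtain ⟨B₀, hB₀, hx₀, -⟩ := ℬ.exists_ball x₀ x₀
  set G : ℕ → Set X := fun n => Nat.rec B₀ (fun _ B => ℬ.step B) n with hGdef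
  have hGmem : ∀ n, G n ∈ ℬ.balls := by
    intro n
    induction n with
    | zero => exact hB₀
    | succ n ih => exact (ℬ.step_spec ih).1
  have hstar : ∀ n, ℬ.star (G n) ⊆ G (n + 1) := fun n => (ℬ.step_spec (hGmem n)).2.1
  have hdich : ∀ n, (∀ A ∈ ℬ.balls, (A ∩ G n).Nonempty → μ A ≤ 2 * μ (G n)) ∨
      2 * μ (G n) < μ (G (n + 1)) := fun n => (ℬ.step_spec (hGmem n)).2.2
  have hsucc : ∀ n, G n ⊆ G (n + 1) := fun n =>
    (ℬ.subset_star (hGmem n)).trans (hstar n)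
  have hmono : Monotone G := monotone_nat_of_le_succ hsucc
  have hx₀G : ∀ n, x₀ ∈ G n := fun n => hmono (Nat.zero_le n) hx₀
  -- key absorption lemma
  have key : ∀ m, ∀ C ∈ ℬ.balls, (C ∩ G m).Nonempty → ∃ n, C ⊆ G n := by
    intro m C hC hmeet
    by_contra hcon
    push_neg at hcon
    have hmeet' : ∀ n, m ≤ n → (C ∩ G n).Nonempty := fun n hn =>
      hmeet.mono (inter_subset_inter_right _ (hmono hn))
    -- for all n ≥ m, 2 μ (G n) < μ C
    have hbig : ∀ n, m ≤ n → 2 * μ (G n) < μ C := by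
      intro n hn
      by_contra hle
      push_neg at hle
      exact hcon (n + 1) ((ℬ.mem_star_of hC hle (hmeet' n hn)).trans (hstar n))
    -- hence growth at each step
    have hgrow : ∀ n, m ≤ n → 2 * μ (G n) < μ (G (n + 1)) := by
      intro n hn
      rcases hdich n with h | h
      · exact absurd (h C hC (hmeet' n hn)) (not_le.mpr (hbig n hn))
      · exact h
    have hpow : ∀ k, 2 ^ k * μ (G m) ≤ μ (G (m + k)) := by
      intro k
      induction k with
      | zero => simp
      | succ k ih =>
        calc 2 ^ (k + 1) * μ (G m) = 2 * (2 ^ k * μ (G m)) := by ring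
          _ ≤ 2 * μ (G (m + k)) := by gcongr
          _ ≤ μ (G (m + k + 1)) := (hgrow (m + k) (Nat.le_add_right m k)).le
    -- but 2^k μ (G m) → ∞, contradiction
    have h0 : μ (G m) ≠ 0 := (ℬ.measure_pos _ (hGmem m)).ne'
    have hCtop : μ C ≠ ∞ := (ℬ.measure_lt_top C hC).ne
    obtain ⟨k, hk⟩ := ENNReal.exists_nat_gt (ENNReal.div_lt_top hCtop h0).ne
    have hklt : μ C < (k : ℝ≥0∞) * μ (G m) := by
      rwa [ENNReal.div_lt_iff (Or.inl h0) (Or.inl (ℬ.measure_lt_top _ (hGmem m)).ne)] at hk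
    have hk2 : (k : ℝ≥0∞) ≤ 2 ^ k := by
      exact_mod_cast (Nat.lt_two_pow_self (n := k)).le
    have : μ C < μ (G (m + k)) :=
      lt_of_lt_of_le (lt_of_lt_of_le hklt (by gcongr)) (hpow k)
    exact absurd (hbig (m + k) (Nat.le_add_right m k))
      (not_lt.mpr (le_trans this.le (le_mul_of_one_le_left zero_le one_le_two)))
  -- every ball is eventually absorbed
  have absorb : ∀ B ∈ ℬ.balls, ∃ n, B ⊆ G n := by
    intro B hB
    obtain ⟨y, hy⟩ := ℬ.nonempty_of_mem hB
    obtain ⟨C, hC, hyC, hx₀C⟩ := ℬ.exists_ball y x₀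
    obtain ⟨n, hn⟩ := key 0 C hC ⟨x₀, hx₀C, hx₀G 0⟩
    exact key n B hB ⟨y, hy, hn hyC⟩
  refine ⟨G, hGmem, hmono, ?_, absorb⟩
  refine eq_univ_of_forall fun x => ?_
  obtain ⟨B, hB, hx, -⟩ := ℬ.exists_ball x x
  obtain ⟨n, hn⟩ := absorb B hB
  exact mem_iUnion.mpr ⟨n, hn hx⟩
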